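/- Let (X, ρ) be a complete metric space, let d be the Bebutov metric on C(ℝ≥0, X), let φ ∈ C(ℝ≥0, X), and τ > 0. Then lim_{t→∞} ρ(φ(t+τ), φ(t)) = 0 if and only if lim_{t→∞} d(φ^{t+τ}, φ^t) = 0, where φ^h(s) := φ(s+h). -/

import Mathlib

open Filter Topology Set

theorem stmt10 {X : Type*} [MetricSpace X] [CompleteSpace X]
    (d : (ℝ → X) → (ℝ → X) → ℝ)
    (hd : ∀ f g : ℝ → X, d f g =
      ⨆ L : Ioi (0:ℝ), min (sSup ((fun t => dist (f t) (g t)) '' Icc (0:ℝ) (L:ℝ))) (1 / (L:ℝ)))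
    (φ : ℝ → X) (hφ : ContinuousOn φ (Ici 0))
    (τ : ℝ) (hτ : 0 < τ) :
    Tendsto (fun t => dist (φ (t + τ)) (φ t)) atTop (𝓝 0) ↔
      Tendsto (fun t => d (fun s => φ (s + (t + τ))) (fun s => φ (s + t))) atTop (𝓝 0) := by
  haveI : Nonempty (Ioi (0:ℝ)) := ⟨⟨1, mem_Ioi.mpr one_pos⟩⟩
  have hcont : ∀ a : ℝ, 0 ≤ a → ContinuousOn (fun s => φ (s + a)) (Ici 0) := by
    intro a ha
    exact hφ.comp ((continuous_id.add continuous_const).continuousOn)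
      (fun x hx => add_nonneg hx ha)
  have hdistcont : ∀ t : ℝ, 0 ≤ t → ContinuousOn
      (fun s => dist (φ (s + (t + τ))) (φ (s + t))) (Ici 0) :=
    fun t ht => by have := continuous_dist.comp_continuousOn ((hcont (t + τ) (add_nonneg ht hτ.le)).prodMk (hcont t ht)); exact this
  set S : ℝ → ℝ → Set ℝ :=
    fun t L => (fun s => dist (φ (s + (t + τ))) (φ (s + t))) '' Icc 0 L with hS
  have hne : ∀ t L : ℝ, 0 ≤ L → (S t L).Nonempty :=
    fun t L hL => (nonempty_Icc.mpr hL).image _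
  have hbdd : ∀ t L : ℝ, 0 ≤ t → BddAbove (S t L) := fun t L ht =>
    (isCompact_Icc.image_of_continuousOn ((hdistcont t ht).mono Icc_subset_Ici_self)).bddAbove
  have hmono : ∀ t L1 L2 : ℝ, 0 ≤ t → 0 ≤ L1 → L1 ≤ L2 → sSup (S t L1) ≤ sSup (S t L2) :=
    fun t L1 L2 ht h1 h12 => csSup_le_csSup (hbdd t L2 ht) (hne t L1 h1)
      (image_mono (Icc_subset_Icc_right h12))
  have hdval : ∀ t : ℝ, d (fun s => φ (s + (t + τ))) (fun s => φ (s + t)) =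
      ⨆ L : Ioi (0:ℝ), min (sSup (S t L)) (1 / (L:ℝ)) := by
    intro t
    rw [hd]
  have hnonneg : ∀ t : ℝ,
      0 ≤ ⨆ L : Ioi (0:ℝ), min (sSup (S t L)) (1 / (L:ℝ)) := by
    intro t
    apply Real.iSup_nonneg
    rintro ⟨L, hL⟩
    have hL' : (0:ℝ) < L := hL
    exact le_min (Real.sSup_nonneg (by rintro x ⟨s, _, rfl⟩; exact dist_nonneg))
      (by positivity)
  constructor
  · intro h
    rw [Metric.tendsto_atTop] at h ⊢
    intro ε hε
    obtain ⟨N, hN⟩ := h (ε / 2) (by positivity)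
    refine ⟨max N 0, fun t ht => ?_⟩
    have ht0 : (0:ℝ) ≤ t := le_trans (le_max_right N 0) ht
    have htN : N ≤ t := le_trans (le_max_left N 0) ht
    have hkey : ∀ L : ℝ, 0 ≤ L → sSup (S t L) ≤ ε / 2 := by
      intro L hL
      apply csSup_le (hne t L hL)
      rintro x ⟨s, hs, rfl⟩
      have hst : N ≤ s + t := by linarith [hs.1]
      have := hN (s + t) hst
      rw [Real.dist_eq, sub_zero, abs_of_nonneg dist_nonneg] at this
      show dist (φ (s + (t + τ))) (φ (s + t)) ≤ ε / 2
      have heq : s + (t + τ) = s + t + τ := by ring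
      rw [heq]
      exact this.le
    rw [hdval t, Real.dist_eq, sub_zero, abs_of_nonneg (hnonneg t)]
    have : (⨆ L : Ioi (0:ℝ), min (sSup (S t L)) (1 / (L:ℝ))) ≤ ε / 2 := by
      apply ciSup_le
      rintro ⟨L, hL⟩
      exact le_trans (min_le_left _ _) (hkey L hL.le)
    linarith
  · intro h
    rw [Metric.tendsto_atTop] at h ⊢
    intro ε hε
    obtain ⟨N, hN⟩ := h (min (ε / 2) (1 / 2)) (by positivity)
    refine ⟨max N 0, fun t ht => ?_⟩
    have ht0 : (0:ℝ) ≤ t := le_trans (le_max_right N 0) ht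
    have htN : N ≤ t := le_trans (le_max_left N 0) ht
    have hdt := hN t htN
    rw [hdval t, Real.dist_eq, sub_zero, abs_of_nonneg (hnonneg t)] at hdt
    have hbddrange : BddAbove (Set.range fun L : Ioi (0:ℝ) =>
        min (sSup (S t L)) (1 / (L:ℝ))) := by
      refine ⟨max (sSup (S t 1)) 1, ?_⟩
      rintro x ⟨⟨L, hL⟩, rfl⟩
      rcases le_total L 1 with hL1 | hL1
      · exact le_max_of_le_left ((min_le_left _ _).trans (hmono t L 1 ht0 (le_of_lt hL) hL1))
      · refine le_max_of_le_right ((min_le_right _ _).trans ?_)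
        rw [div_le_one (lt_of_lt_of_le one_pos hL1)]
        exact hL1
    have hterm : min (sSup (S t 1)) 1 ≤
        ⨆ L : Ioi (0:ℝ), min (sSup (S t L)) (1 / (L:ℝ)) := by
      have := le_ciSup hbddrange (⟨1, mem_Ioi.mpr one_pos⟩ : Ioi (0:ℝ))
      simpa using this
    have h1 : min (sSup (S t 1)) 1 < min (ε / 2) (1 / 2) := lt_of_le_of_lt hterm hdt
    have hsup : sSup (S t 1) < min (ε / 2) (1 / 2) := by
      by_contra hc
      push_neg at hc
      have : min (ε / 2) (1 / 2) ≤ min (sSup (S t 1)) 1 := by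
        refine le_min hc ?_
        exact le_trans (min_le_right _ _) (by norm_num)
      linarith
    have hmem : dist (φ (t + τ)) (φ t) ∈ S t 1 := by
      refine ⟨0, ⟨le_refl _, zero_le_one⟩, ?_⟩
      simp
    have hle : dist (φ (t + τ)) (φ t) ≤ sSup (S t 1) := le_csSup (hbdd t 1 ht0) hmem
    rw [Real.dist_eq, sub_zero, abs_of_nonneg dist_nonneg]
    have : min (ε / 2) (1 / 2) ≤ ε / 2 := min_le_left _ _
    linarith
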